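/- Let p, q : ℝ² → ℝ be C¹ functions and for h in an open interval J let a₁(h) > 0 and a₂(h) > 0 be C¹ functions such that the clockwise arc Γ_h = {(x,y) : x² + y² = 2h, x ≥ 0, y ≥ 0} runs from A₁(h) = (0, a₁(h)) to A₂(h) = (a₂(h), 0), with a₁(h) = a₂(h) = √(2h). Define M₁(h) = ∫_{Γ_h} q dx − p dy. Then M₁ is differentiable in h and M₁'(h) = ∫_{Γ_h} (p_x + q_y) dt + p(0, a₁(h)) a₁'(h) + q(a₂(h), 0) a₂'(h), where dt denotes integration with respect to the time parametrization ẋ = y, ẏ = −x of Γ_h. -/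

import Mathlib

open Real

noncomputable def mdfArc (x t : ℝ) : ℝ × ℝ :=
  (Real.sqrt (2*x) * Real.sin t, Real.sqrt (2*x) * Real.cos t)

noncomputable def mdfF (p q : ℝ × ℝ → ℝ) (x t : ℝ) : ℝ :=
  q (mdfArc x t) * (Real.sqrt (2*x) * Real.cos t)
    - p (mdfArc x t) * (-(Real.sqrt (2*x) * Real.sin t))

noncomputable def mdfFd (p q : ℝ × ℝ → ℝ) (x t : ℝ) : ℝ :=
  fderiv ℝ q (mdfArc x t) (Real.sin t, Real.cos t) * Real.cos t
  + fderiv ℝ p (mdfArc x t) (Real.sin t, Real.cos t) * Real.sin t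
  + (Real.sqrt (2*x))⁻¹ * (q (mdfArc x t) * Real.cos t + p (mdfArc x t) * Real.sin t)

noncomputable def mdfG (p q : ℝ × ℝ → ℝ) (x t : ℝ) : ℝ :=
  q (mdfArc x t) * Real.sin t - p (mdfArc x t) * Real.cos t

noncomputable def mdfGd (p q : ℝ × ℝ → ℝ) (x t : ℝ) : ℝ :=
  (fderiv ℝ q (mdfArc x t) (Real.sqrt (2*x) * Real.cos t, -(Real.sqrt (2*x) * Real.sin t))
      * Real.sin t + q (mdfArc x t) * Real.cos t)
  - (fderiv ℝ p (mdfArc x t) (Real.sqrt (2*x) * Real.cos t, -(Real.sqrt (2*x) * Real.sin t))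
      * Real.cos t - p (mdfArc x t) * Real.sin t)

lemma mdf_clm_pair (L : ℝ × ℝ →L[ℝ] ℝ) (a b : ℝ) :
    L (a, b) = a * L (1, 0) + b * L (0, 1) := by
  have h : (a, b) = a • ((1:ℝ), (0:ℝ)) + b • ((0:ℝ), (1:ℝ)) := by
    simp [Prod.ext_iff]
  rw [h, map_add, map_smul, map_smul, smul_eq_mul, smul_eq_mul]

lemma mdf_sqrt_deriv {x : ℝ} (hx : 0 < x) :
    HasDerivAt (fun y => Real.sqrt (2*y)) ((Real.sqrt (2*x))⁻¹) x := by
  have h2 : HasDerivAt (fun y : ℝ => 2*y) 2 x := by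
    simpa using (hasDerivAt_id x).const_mul 2
  have hs : HasDerivAt Real.sqrt (1 / (2 * Real.sqrt (2*x))) (2*x) :=
    Real.hasDerivAt_sqrt (by positivity)
  have := hs.comp x h2
  have hr : Real.sqrt (2*x) ≠ 0 := by positivity
  refine this.congr_deriv ?_
  field_simp

lemma mdf_hasDerivAt_F (p q : ℝ × ℝ → ℝ) (hp : ContDiff ℝ 1 p) (hq : ContDiff ℝ 1 q)
    {x : ℝ} (hx : 0 < x) (t : ℝ) :
    HasDerivAt (fun y => mdfF p q y t) (mdfFd p q x t) x := by
  have hr : Real.sqrt (2*x) ≠ 0 := by positivity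
  have hR := mdf_sqrt_deriv hx
  have hγ : HasDerivAt (fun y => mdfArc y t)
      ((Real.sqrt (2*x))⁻¹ * Real.sin t, (Real.sqrt (2*x))⁻¹ * Real.cos t) x :=
    (hR.mul_const _).prodMk (hR.mul_const _)
  have hqd : HasDerivAt (fun y => q (mdfArc y t))
      (fderiv ℝ q (mdfArc x t) ((Real.sqrt (2*x))⁻¹ * Real.sin t,
        (Real.sqrt (2*x))⁻¹ * Real.cos t)) x :=
    (hq.differentiable one_ne_zero (mdfArc x t)).hasFDerivAt.comp_hasDerivAt x hγ
  have hpd : HasDerivAt (fun y => p (mdfArc y t))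
      (fderiv ℝ p (mdfArc x t) ((Real.sqrt (2*x))⁻¹ * Real.sin t,
        (Real.sqrt (2*x))⁻¹ * Real.cos t)) x :=
    (hp.differentiable one_ne_zero (mdfArc x t)).hasFDerivAt.comp_hasDerivAt x hγ
  have key := (hqd.mul (hR.mul_const (Real.cos t))).sub
      (hpd.mul ((hR.mul_const (Real.sin t)).neg))
  have hv : ((Real.sqrt (2*x))⁻¹ * Real.sin t, (Real.sqrt (2*x))⁻¹ * Real.cos t)
      = (Real.sqrt (2*x))⁻¹ • (Real.sin t, Real.cos t) := by
    simp [Prod.ext_iff]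
  rw [hv, map_smul, map_smul, smul_eq_mul] at key
  refine key.congr_deriv ?_
  unfold mdfFd
  simp only [Pi.neg_apply, smul_eq_mul]
  field_simp
  ring

lemma mdf_arc_cont : Continuous (fun z : ℝ × ℝ => mdfArc z.1 z.2) := by
  unfold mdfArc; fun_prop

lemma mdf_F_cont (p q : ℝ × ℝ → ℝ) (hp : ContDiff ℝ 1 p) (hq : ContDiff ℝ 1 q) (x : ℝ) :
    Continuous (fun t => mdfF p q x t) := by
  have := hp.continuous; have := hq.continuous
  unfold mdfF mdfArc; fun_prop

lemma mdf_Fd_contOn (p q : ℝ × ℝ → ℝ) (hp : ContDiff ℝ 1 p) (hq : ContDiff ℝ 1 q) :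
    ContinuousOn (fun z : ℝ × ℝ => mdfFd p q z.1 z.2) {z : ℝ × ℝ | 0 < z.1} := by
  have harc := mdf_arc_cont
  have hqf : Continuous fun z : ℝ × ℝ =>
      fderiv ℝ q (mdfArc z.1 z.2) (Real.sin z.2, Real.cos z.2) :=
    ((hq.continuous_fderiv one_ne_zero).comp harc).clm_apply (by fun_prop)
  have hpf : Continuous fun z : ℝ × ℝ =>
      fderiv ℝ p (mdfArc z.1 z.2) (Real.sin z.2, Real.cos z.2) :=
    ((hp.continuous_fderiv one_ne_zero).comp harc).clm_apply (by fun_prop)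
  have hinv : ContinuousOn (fun z : ℝ × ℝ => (Real.sqrt (2*z.1))⁻¹) {z : ℝ × ℝ | 0 < z.1} := by
    apply ContinuousOn.inv₀ (by fun_prop)
    intro z hz
    have : (0:ℝ) < z.1 := hz
    positivity
  unfold mdfFd
  apply ContinuousOn.add
  · exact ((hqf.mul (by fun_prop)).add (hpf.mul (by fun_prop))).continuousOn
  · exact hinv.mul (Continuous.continuousOn (by
      exact ((hq.continuous.comp harc).mul (by fun_prop)).add
        ((hp.continuous.comp harc).mul (by fun_prop))))

lemma mdf_Gd_cont (p q : ℝ × ℝ → ℝ) (hp : ContDiff ℝ 1 p) (hq : ContDiff ℝ 1 q) (x : ℝ) :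
    Continuous (fun t => mdfGd p q x t) := by
  have harc : Continuous (fun t => mdfArc x t) := by unfold mdfArc; fun_prop
  have hqf : Continuous fun t =>
      fderiv ℝ q (mdfArc x t)
        (Real.sqrt (2*x) * Real.cos t, -(Real.sqrt (2*x) * Real.sin t)) :=
    ((hq.continuous_fderiv one_ne_zero).comp harc).clm_apply (by fun_prop)
  have hpf : Continuous fun t =>
      fderiv ℝ p (mdfArc x t)
        (Real.sqrt (2*x) * Real.cos t, -(Real.sqrt (2*x) * Real.sin t)) :=
    ((hp.continuous_fderiv one_ne_zero).comp harc).clm_apply (by fun_prop)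
  unfold mdfGd
  exact ((hqf.mul (by fun_prop)).add ((hq.continuous.comp harc).mul (by fun_prop))).sub
    ((hpf.mul (by fun_prop)).sub ((hp.continuous.comp harc).mul (by fun_prop)))

lemma mdf_pxqy_cont (p q : ℝ × ℝ → ℝ) (hp : ContDiff ℝ 1 p) (hq : ContDiff ℝ 1 q) (x : ℝ) :
    Continuous (fun t => fderiv ℝ p (mdfArc x t) (1, 0) + fderiv ℝ q (mdfArc x t) (0, 1)) := by
  have harc : Continuous (fun t => mdfArc x t) := by unfold mdfArc; fun_prop
  exact (((hp.continuous_fderiv one_ne_zero).comp harc).clm_apply continuous_const).add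
    (((hq.continuous_fderiv one_ne_zero).comp harc).clm_apply continuous_const)

lemma mdf_hasDerivAt_G (p q : ℝ × ℝ → ℝ) (hp : ContDiff ℝ 1 p) (hq : ContDiff ℝ 1 q)
    (x t : ℝ) : HasDerivAt (fun s => mdfG p q x s) (mdfGd p q x t) t := by
  have hγ : HasDerivAt (fun s => mdfArc x s)
      (Real.sqrt (2*x) * Real.cos t, -(Real.sqrt (2*x) * Real.sin t)) t := by
    have h1 := (Real.hasDerivAt_sin t).const_mul (Real.sqrt (2*x))
    have h2 := (Real.hasDerivAt_cos t).const_mul (Real.sqrt (2*x))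
    have := h1.prodMk h2
    simp only [mul_neg] at this
    exact this
  have hqd := (hq.differentiable one_ne_zero (mdfArc x t)).hasFDerivAt.comp_hasDerivAt t hγ
  have hpd := (hp.differentiable one_ne_zero (mdfArc x t)).hasFDerivAt.comp_hasDerivAt t hγ
  have := (hqd.mul (Real.hasDerivAt_sin t)).sub (hpd.mul (Real.hasDerivAt_cos t))
  simp only [Function.comp_apply] at this
  exact this.congr_deriv (by unfold mdfGd; ring)

lemma mdf_identity (p q : ℝ × ℝ → ℝ) {x : ℝ} (hx : 0 < x) (t : ℝ) :
    mdfFd p q x t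
      = (fderiv ℝ p (mdfArc x t) (1, 0) + fderiv ℝ q (mdfArc x t) (0, 1))
        + (Real.sqrt (2*x))⁻¹ * mdfGd p q x t := by
  have hr : Real.sqrt (2*x) ≠ 0 := by positivity
  have hsc := Real.sin_sq_add_cos_sq t
  unfold mdfFd mdfGd
  rw [mdf_clm_pair (fderiv ℝ q (mdfArc x t)), mdf_clm_pair (fderiv ℝ p (mdfArc x t)),
    mdf_clm_pair (fderiv ℝ q (mdfArc x t)) (Real.sqrt (2*x) * Real.cos t),
    mdf_clm_pair (fderiv ℝ p (mdfArc x t)) (Real.sqrt (2*x) * Real.cos t)]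
  field_simp
  linear_combination (Real.sqrt (2*x) *
    (fderiv ℝ p (mdfArc x t) (1, 0) + fderiv ℝ q (mdfArc x t) (0, 1))) * hsc

set_option maxHeartbeats 1000000 in
/-- Lemma A.1, first identity: with `Γ_h` the clockwise first-quadrant
quarter arc of `x² + y² = 2h`, `A₁(h) = (0, a₁(h))`, `A₂(h) = (a₂(h), 0)`,
`a₁(h) = a₂(h) = √(2h)` C¹ in `h` on the open interval `J`, and
`M₁(h) = ∫_{Γ_h} q dx − p dy`, one has
`M₁'(h) = ∫_{Γ_h} (p_x + q_y) dt + p(0,a₁(h)) a₁'(h) + q(a₂(h),0) a₂'(h)`. -/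
theorem melnikov_derivative_formula
    (p q : ℝ × ℝ → ℝ) (hp : ContDiff ℝ 1 p) (hq : ContDiff ℝ 1 q)
    (J : Set ℝ) (hJ : ∃ a b : ℝ, J = Set.Ioo a b) (hJpos : ∀ h ∈ J, 0 < h)
    (a₁ a₂ a₁' a₂' : ℝ → ℝ)
    (ha₁ : ∀ h ∈ J, a₁ h = Real.sqrt (2*h)) (ha₂ : ∀ h ∈ J, a₂ h = Real.sqrt (2*h))
    (hd₁ : ∀ h ∈ J, HasDerivAt a₁ (a₁' h) h) (hd₂ : ∀ h ∈ J, HasDerivAt a₂ (a₂' h) h)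
    (M₁ : ℝ → ℝ)
    (hM₁ : ∀ h : ℝ, M₁ h = ∫ t in (0:ℝ)..(π/2),
      (q (Real.sqrt (2*h) * Real.sin t, Real.sqrt (2*h) * Real.cos t) *
          (Real.sqrt (2*h) * Real.cos t)
        - p (Real.sqrt (2*h) * Real.sin t, Real.sqrt (2*h) * Real.cos t) *
          (-(Real.sqrt (2*h) * Real.sin t)))) :
    ∀ h ∈ J, HasDerivAt M₁
      ((∫ t in (0:ℝ)..(π/2),
          (fderiv ℝ p (Real.sqrt (2*h) * Real.sin t, Real.sqrt (2*h) * Real.cos t) (1, 0)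
           + fderiv ℝ q (Real.sqrt (2*h) * Real.sin t, Real.sqrt (2*h) * Real.cos t) (0, 1)))
        + p (0, a₁ h) * a₁' h + q (a₂ h, 0) * a₂' h) h := by

  obtain ⟨A, B, rfl⟩ := hJ
  intro h hh
  have hh0 : 0 < h := hJpos h hh
  have hRpos : 0 < Real.sqrt (2*h) := Real.sqrt_pos.2 (by linarith)
  have hR0 : Real.sqrt (2*h) ≠ 0 := ne_of_gt hRpos
  set ε : ℝ := min (min (h - A) (B - h)) (h/2) with hεdef
  have hεpos : 0 < ε :=
    lt_min (lt_min (by linarith [hh.1]) (by linarith [hh.2])) (by linarith)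
  have hball : ∀ x ∈ Metric.ball h ε, 0 < x := by
    intro x hx
    have := abs_lt.1 (mem_ball_iff_norm.1 hx)
    have hε2 : ε ≤ h/2 := min_le_right _ _
    linarith [this.1]
  -- derivatives of a₁, a₂ at h
  have hRd : HasDerivAt (fun y => Real.sqrt (2*y)) ((Real.sqrt (2*h))⁻¹) h :=
    mdf_sqrt_deriv hh0
  have hev₁ : a₁ =ᶠ[nhds h] fun y => Real.sqrt (2*y) :=
    Filter.eventuallyEq_of_mem (isOpen_Ioo.mem_nhds hh) (fun y hy => ha₁ y hy)
  have hev₂ : a₂ =ᶠ[nhds h] fun y => Real.sqrt (2*y) :=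
    Filter.eventuallyEq_of_mem (isOpen_Ioo.mem_nhds hh) (fun y hy => ha₂ y hy)
  have ha₁d : a₁' h = (Real.sqrt (2*h))⁻¹ :=
    (hd₁ h hh).unique (hRd.congr_of_eventuallyEq hev₁)
  have ha₂d : a₂' h = (Real.sqrt (2*h))⁻¹ :=
    (hd₂ h hh).unique (hRd.congr_of_eventuallyEq hev₂)
  -- rewrite M₁
  have hM : M₁ = fun x => ∫ t in (0:ℝ)..(π/2), mdfF p q x t := by
    funext x
    rw [hM₁ x]
    simp only [mdfF, mdfArc]
  rw [hM]
  -- bound on compact set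
  have hKsub : (Set.Icc (h-ε) (h+ε) ×ˢ Set.Icc (0:ℝ) (π/2)) ⊆ {z : ℝ × ℝ | 0 < z.1} := by
    intro z hz
    have h1 := hz.1.1
    have hε2 : ε ≤ h/2 := min_le_right _ _
    show 0 < z.1
    linarith
  obtain ⟨C, hC⟩ := (isCompact_Icc.prod isCompact_Icc).exists_bound_of_continuousOn
    ((mdf_Fd_contOn p q hp hq).mono hKsub)
  have hπ : (0:ℝ) ≤ π/2 := by positivity
  have huIoc : Set.uIoc (0:ℝ) (π/2) = Set.Ioc 0 (π/2) := Set.uIoc_of_le hπ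
  -- apply dominated differentiation
  have hmeas : ∀ᶠ x in nhds h, MeasureTheory.AEStronglyMeasurable (fun t => mdfF p q x t)
      (MeasureTheory.volume.restrict (Set.uIoc (0:ℝ) (π/2))) :=
    Filter.Eventually.of_forall fun x => (mdf_F_cont p q hp hq x).aestronglyMeasurable
  have hFint : IntervalIntegrable (fun t => mdfF p q h t) MeasureTheory.volume 0 (π/2) :=
    (mdf_F_cont p q hp hq h).intervalIntegrable _ _
  have hFdcont : Continuous (fun t => mdfFd p q h t) := by
    have := (mdf_Fd_contOn p q hp hq).comp_continuous
      (f := fun t : ℝ => (h, t)) (continuous_const.prodMk continuous_id)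
      (fun t => show 0 < h from hh0)
    exact this
  have hFdmeas : MeasureTheory.AEStronglyMeasurable (fun t => mdfFd p q h t)
      (MeasureTheory.volume.restrict (Set.uIoc (0:ℝ) (π/2))) :=
    hFdcont.aestronglyMeasurable
  have hbound : ∀ᵐ t ∂(MeasureTheory.volume : MeasureTheory.Measure ℝ),
      t ∈ Set.uIoc (0:ℝ) (π/2) → ∀ x ∈ Metric.ball h ε, ‖mdfFd p q x t‖ ≤ C := by
    refine MeasureTheory.ae_of_all _ fun t ht x hx => ?_
    rw [huIoc] at ht
    have hx' := abs_lt.1 (mem_ball_iff_norm.1 hx)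
    exact hC (x, t) ⟨⟨by linarith [hx'.1], by linarith [hx'.2]⟩, ⟨le_of_lt ht.1, ht.2⟩⟩
  have hdiff : ∀ᵐ t ∂(MeasureTheory.volume : MeasureTheory.Measure ℝ),
      t ∈ Set.uIoc (0:ℝ) (π/2) → ∀ x ∈ Metric.ball h ε,
        HasDerivAt (fun y => mdfF p q y t) (mdfFd p q x t) x :=
    MeasureTheory.ae_of_all _ fun t _ x hx => mdf_hasDerivAt_F p q hp hq (hball x hx) t
  have main := (intervalIntegral.hasDerivAt_integral_of_dominated_loc_of_deriv_le
    (Metric.ball_mem_nhds h hεpos) hmeas hFint hFdmeas hbound intervalIntegrable_const hdiff).2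
  -- compute the value of the derivative integral
  have hint1 : IntervalIntegrable
      (fun t => fderiv ℝ p (mdfArc h t) (1, 0) + fderiv ℝ q (mdfArc h t) (0, 1))
      MeasureTheory.volume 0 (π/2) :=
    (mdf_pxqy_cont p q hp hq h).intervalIntegrable _ _
  have hint2 : IntervalIntegrable (fun t => (Real.sqrt (2*h))⁻¹ * mdfGd p q h t)
      MeasureTheory.volume 0 (π/2) :=
    (continuous_const.mul (mdf_Gd_cont p q hp hq h)).intervalIntegrable _ _
  have hval : (∫ t in (0:ℝ)..(π/2), mdfFd p q h t)
      = (∫ t in (0:ℝ)..(π/2),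
          (fderiv ℝ p (mdfArc h t) (1, 0) + fderiv ℝ q (mdfArc h t) (0, 1)))
        + (Real.sqrt (2*h))⁻¹ * (q (Real.sqrt (2*h), 0) + p (0, Real.sqrt (2*h))) := by
    have heq : (∫ t in (0:ℝ)..(π/2), mdfFd p q h t)
        = ∫ t in (0:ℝ)..(π/2),
            ((fderiv ℝ p (mdfArc h t) (1, 0) + fderiv ℝ q (mdfArc h t) (0, 1))
              + (Real.sqrt (2*h))⁻¹ * mdfGd p q h t) :=
      intervalIntegral.integral_congr fun t _ => mdf_identity p q hh0 t
    rw [heq, intervalIntegral.integral_add hint1 hint2,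
      intervalIntegral.integral_const_mul]
    have hftc : (∫ t in (0:ℝ)..(π/2), mdfGd p q h t)
        = mdfG p q h (π/2) - mdfG p q h 0 :=
      intervalIntegral.integral_eq_sub_of_hasDerivAt
        (fun t _ => mdf_hasDerivAt_G p q hp hq h t)
        ((mdf_Gd_cont p q hp hq h).intervalIntegrable _ _)
    rw [hftc]
    have hG1 : mdfG p q h (π/2) = q (Real.sqrt (2*h), 0) := by
      unfold mdfG mdfArc; simp
    have hG0 : mdfG p q h 0 = - p (0, Real.sqrt (2*h)) := by
      unfold mdfG mdfArc; simp
    rw [hG1, hG0]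
    ring
  rw [hval] at main
  simp only [mdfArc] at main ⊢
  refine main.congr_deriv ?_
  rw [ha₁ h hh, ha₂ h hh, ha₁d, ha₂d]
  ring
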